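/- The sequence A_n = K_n/K_{n+1}, where K_n = 2^{4n} Γ((n+1)/2)^2 Γ((n+3/2)/2) Γ((n+1/2)/2), satisfies A_n = (1/4)n^{-2} - (1/4)n^{-3} + O(n^{-4}) as n → ∞. -/

import Mathlib

open Real Filter Set

noncomputable def Wg (x : ℝ) : ℝ := Real.Gamma (x + 1/2) / Real.Gamma (x + 1)

lemma Gamma_mid_sq_le {p q : ℝ} (hp : 0 < p) (hq : 0 < q) :
    Real.Gamma ((p + q) / 2) ^ 2 ≤ Real.Gamma p * Real.Gamma q := by
  have h := Real.convexOn_log_Gamma.2 (Set.mem_Ioi.mpr hp) (Set.mem_Ioi.mpr hq)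
      (by norm_num : (0:ℝ) ≤ 1/2) (by norm_num : (0:ℝ) ≤ 1/2) (by norm_num)
  simp only [Function.comp_apply, smul_eq_mul] at h
  have hmid : (0:ℝ) < (p + q)/2 := by linarith
  have h1 : Real.log (Real.Gamma ((p+q)/2) ^ 2) ≤ Real.log (Real.Gamma p * Real.Gamma q) := by
    rw [Real.log_pow, Real.log_mul (Real.Gamma_pos_of_pos hp).ne' (Real.Gamma_pos_of_pos hq).ne']
    have : 1/2 * p + 1/2 * q = (p+q)/2 := by ring
    rw [this] at h
    push_cast
    linarith
  have := Real.exp_le_exp.mpr h1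
  rwa [Real.exp_log (by positivity), Real.exp_log (by positivity)] at this

lemma Wg_pos {x : ℝ} (hx : 0 < x) : 0 < Wg x :=
  div_pos (Real.Gamma_pos_of_pos (by linarith)) (Real.Gamma_pos_of_pos (by linarith))

lemma Wg_sq_le {x : ℝ} (hx : 0 < x) : Wg x ^ 2 ≤ 1 / x := by
  have h := Gamma_mid_sq_le hx (by linarith : (0:ℝ) < x + 1)
  have hmid : (x + (x+1))/2 = x + 1/2 := by ring
  rw [hmid] at h
  have hg1 : Real.Gamma (x+1) = x * Real.Gamma x := Real.Gamma_add_one hx.ne'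
  have hΓx : 0 < Real.Gamma x := Real.Gamma_pos_of_pos hx
  have hΓ1 : 0 < Real.Gamma (x+1) := Real.Gamma_pos_of_pos (by linarith)
  rw [Wg, div_pow, div_le_div_iff₀ (by positivity) hx]
  calc Real.Gamma (x+1/2)^2 * x ≤ Real.Gamma x * Real.Gamma (x+1) * x := by nlinarith
    _ = 1 * Real.Gamma (x+1)^2 := by rw [hg1]; ring

lemma le_Wg_sq {x : ℝ} (hx : 0 < x) : 1 / (x + 1/2) ≤ Wg x ^ 2 := by
  have h := Gamma_mid_sq_le (by linarith : (0:ℝ) < x + 1/2) (by linarith : (0:ℝ) < x + 3/2)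
  have hmid : ((x + 1/2) + (x + 3/2))/2 = x + 1 := by ring
  rw [hmid] at h
  have hg1 : Real.Gamma (x+3/2) = (x+1/2) * Real.Gamma (x+1/2) := by
    have := Real.Gamma_add_one (s := x + 1/2) (by positivity)
    rw [show x + 1/2 + 1 = x + 3/2 by ring] at this
    exact this
  have hΓh : 0 < Real.Gamma (x+1/2) := Real.Gamma_pos_of_pos (by linarith)
  have hΓ1 : 0 < Real.Gamma (x+1) := Real.Gamma_pos_of_pos (by linarith)
  rw [Wg, div_pow, div_le_div_iff₀ (by positivity) (by positivity)]
  rw [hg1] at h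
  nlinarith

lemma Wg_step {x : ℝ} (hx : 0 < x) : Wg (x+1) = (x + 1/2)/(x+1) * Wg x := by
  have h1 : Real.Gamma (x+1+1/2) = (x+1/2) * Real.Gamma (x+1/2) := by
    have := Real.Gamma_add_one (s := x + 1/2) (by positivity)
    rw [show x + 1/2 + 1 = x + 1 + 1/2 by ring] at this
    exact this
  have h2 : Real.Gamma (x+1+1) = (x+1) * Real.Gamma (x+1) := Real.Gamma_add_one (by positivity)
  have hΓ1 : 0 < Real.Gamma (x+1) := Real.Gamma_pos_of_pos (by linarith)
  rw [Wg, Wg, h1, h2]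
  field_simp

lemma step_u {x : ℝ} (hx : 0 < x) :
    Wg x ^ 2 * (x + 1/4) ≤ Wg (x+1) ^ 2 * ((x+1) + 1/4) := by
  rw [Wg_step hx, mul_pow, div_pow]
  have h1 : (0:ℝ) < (x+1)^2 := by positivity
  rw [div_mul_eq_mul_div, div_mul_eq_mul_div, le_div_iff₀ h1]
  nlinarith [sq_nonneg (Wg x)]

lemma step_l {x : ℝ} (hx : 0 < x) :
    Wg (x+1) ^ 2 * ((x+1) + 1/4 + 1/(32*(x+1))) ≤ Wg x ^ 2 * (x + 1/4 + 1/(32*x)) := by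
  rw [Wg_step hx, mul_pow, div_pow]
  have h1 : (0:ℝ) < (x+1)^2 := by positivity
  rw [div_mul_eq_mul_div, div_mul_eq_mul_div, div_le_iff₀ h1]
  have key : (x+1/2)^2 * ((x+1) + 1/4 + 1/(32*(x+1))) ≤ (x + 1/4 + 1/(32*x)) * (x+1)^2 := by
    rw [← sub_nonneg]
    have hD : (x + 1/4 + 1/(32*x)) * (x+1)^2 - (x+1/2)^2 * ((x+1) + 1/4 + 1/(32*(x+1)))
        = (3*x+4)/(128*x*(x+1)) := by
      field_simp
      ring
    rw [hD]
    positivity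
  calc (x+1/2)^2 * Wg x ^2 * ((x+1) + 1/4 + 1/(32*(x+1)))
      = Wg x ^ 2 * ((x+1/2)^2 * ((x+1) + 1/4 + 1/(32*(x+1)))) := by ring
    _ ≤ Wg x ^ 2 * ((x + 1/4 + 1/(32*x)) * (x+1)^2) :=
        mul_le_mul_of_nonneg_left key (sq_nonneg _)
    _ = Wg x ^ 2 * (x + 1/4 + 1/(32*x)) * (x+1)^2 := by ring

lemma Wg_sq_le_sharp {x : ℝ} (hx : 0 < x) : Wg x ^ 2 * (x + 1/4) ≤ 1 := by
  have mono : ∀ k : ℕ, Wg x ^ 2 * (x + 1/4) ≤ Wg (x + k) ^ 2 * ((x + k) + 1/4) := by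
    intro k
    induction k with
    | zero => simp
    | succ n ih =>
      refine ih.trans ?_
      have := step_u (x := x + n) (by positivity)
      push_cast
      rw [show x + ((n:ℝ)+1) = x + (n:ℝ) + 1 by ring]
      exact this
  have bnd : ∀ k : ℕ, Wg x ^ 2 * (x + 1/4) ≤ (x + k + 1/4) / (x + k) := by
    intro k
    refine (mono k).trans ?_
    have hxk : (0:ℝ) < x + k := by positivity
    have := Wg_sq_le hxk
    calc Wg (x + k) ^ 2 * ((x + k) + 1/4)
        ≤ (1/(x+k)) * ((x + k) + 1/4) := by
          apply mul_le_mul_of_nonneg_right this (by linarith)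
      _ = (x + k + 1/4) / (x + k) := by rw [one_div, inv_mul_eq_div]
  have tend : Filter.Tendsto (fun k : ℕ => (x + k + 1/4) / (x + k)) Filter.atTop (nhds 1) := by
    have h0 : Filter.Tendsto (fun k : ℕ => x + (k:ℝ)) Filter.atTop Filter.atTop :=
      Filter.tendsto_atTop_add_const_left _ _ tendsto_natCast_atTop_atTop
    have h2 : Filter.Tendsto (fun k : ℕ => (x + (k:ℝ))⁻¹) Filter.atTop (nhds 0) :=
      h0.inv_tendsto_atTop
    have h3 : Filter.Tendsto (fun k : ℕ => 1 + (1/4) * (x + (k:ℝ))⁻¹) Filter.atTop (nhds (1 + (1/4)*0)) :=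
      tendsto_const_nhds.add (h2.const_mul _)
    refine Filter.Tendsto.congr' ?_ (by simpa using h3)
    filter_upwards [Filter.eventually_atTop.mpr ⟨0, fun k _ => trivial⟩] with k _
    have hxk : (x + (k:ℝ)) ≠ 0 := by positivity
    field_simp
  exact ge_of_tendsto' tend bnd

lemma le_Wg_sq_sharp {x : ℝ} (hx : 0 < x) : 1 ≤ Wg x ^ 2 * (x + 1/4 + 1/(32*x)) := by
  have mono : ∀ k : ℕ, Wg (x + k) ^ 2 * ((x + k) + 1/4 + 1/(32*(x+k))) ≤ Wg x ^ 2 * (x + 1/4 + 1/(32*x)) := by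
    intro k
    induction k with
    | zero => simp
    | succ n ih =>
      refine le_trans ?_ ih
      have := step_l (x := x + n) (by positivity)
      push_cast
      rw [show x + ((n:ℝ)+1) = x + (n:ℝ) + 1 by ring]
      exact this
  have bnd : ∀ k : ℕ, ((x + k) + 1/4 + 1/(32*(x+k))) / ((x + k) + 1/2) ≤ Wg x ^ 2 * (x + 1/4 + 1/(32*x)) := by
    intro k
    refine le_trans ?_ (mono k)
    have hxk : (0:ℝ) < x + k := by positivity
    have hket := le_Wg_sq hxk
    have hq : (0:ℝ) < (x + k) + 1/4 + 1/(32*(x+k)) := by positivity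
    calc ((x + k) + 1/4 + 1/(32*(x+k))) / ((x + k) + 1/2)
        = (1/((x+k) + 1/2)) * ((x + k) + 1/4 + 1/(32*(x+k))) := by ring
      _ ≤ Wg (x+k) ^ 2 * ((x + k) + 1/4 + 1/(32*(x+k))) :=
          mul_le_mul_of_nonneg_right hket hq.le
  have tend : Filter.Tendsto (fun k : ℕ => ((x + k) + 1/4 + 1/(32*(x+k))) / ((x + k) + 1/2)) Filter.atTop (nhds 1) := by
    have h0 : Filter.Tendsto (fun k : ℕ => x + (k:ℝ)) Filter.atTop Filter.atTop :=
      Filter.tendsto_atTop_add_const_left _ _ tendsto_natCast_atTop_atTop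
    have h2 : Filter.Tendsto (fun k : ℕ => (x + (k:ℝ))⁻¹) Filter.atTop (nhds 0) :=
      h0.inv_tendsto_atTop
    have hnum : Filter.Tendsto (fun k : ℕ => 1 + (1/4) * (x + (k:ℝ))⁻¹ + (1/32) * ((x + (k:ℝ))⁻¹)^2)
        Filter.atTop (nhds (1 + (1/4)*0 + (1/32)*0^2)) :=
      (tendsto_const_nhds.add (h2.const_mul _)).add ((h2.pow 2).const_mul _)
    have hden : Filter.Tendsto (fun k : ℕ => 1 + (1/2) * (x + (k:ℝ))⁻¹)
        Filter.atTop (nhds (1 + (1/2)*0)) :=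
      tendsto_const_nhds.add (h2.const_mul _)
    have hq := hnum.div hden (by norm_num)
    refine Filter.Tendsto.congr' ?_ (by simpa using hq)
    filter_upwards with k
    simp only [Pi.div_apply]
    have hxk : (x + (k:ℝ)) ≠ 0 := by positivity
    field_simp
  exact le_of_tendsto' tend bnd

lemma A_formula (K : ℕ → ℝ)
    (hK : ∀ n : ℕ, K n = 2 ^ (4 * n) *
      Real.Gamma (((n : ℝ) + 1) / 2) ^ 2 *
      Real.Gamma (((n : ℝ) + 3 / 2) / 2) *
      Real.Gamma (((n : ℝ) + 1 / 2) / 2)) (n : ℕ) :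
    K n / K (n+1) = Wg ((n:ℝ)/2) ^ 2 / (16 * ((n:ℝ)/2 + 1/4)) := by
  have hKn := hK n
  have hKn1 := hK (n+1)
  push_cast at hKn1
  set x : ℝ := (n:ℝ)/2 with hxdef
  have hx0 : (0:ℝ) ≤ x := by positivity
  rw [show ((n:ℝ)+1)/2 = x + 1/2 by rw [hxdef]; ring,
      show ((n:ℝ)+3/2)/2 = x + 3/4 by rw [hxdef]; ring,
      show ((n:ℝ)+1/2)/2 = x + 1/4 by rw [hxdef]; ring] at hKn
  rw [show ((n:ℝ)+1+1)/2 = x + 1 by rw [hxdef]; ring,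
      show ((n:ℝ)+1+3/2)/2 = x + 5/4 by rw [hxdef]; ring,
      show ((n:ℝ)+1+1/2)/2 = x + 3/4 by rw [hxdef]; ring] at hKn1
  have hG5 : Real.Gamma (x + 5/4) = (x + 1/4) * Real.Gamma (x + 1/4) := by
    have := Real.Gamma_add_one (s := x + 1/4) (by positivity)
    rw [show x + 1/4 + 1 = x + 5/4 by ring] at this
    exact this
  have hpow : (2:ℝ) ^ (4 * (n+1)) = 2 ^ (4*n) * 16 := by
    rw [show 4*(n+1) = 4*n + 4 by ring, pow_add]
    norm_num
  have hp : (0:ℝ) < 2 ^ (4*n) := by positivity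
  have hg1 : (0:ℝ) < Real.Gamma (x + 1) := Real.Gamma_pos_of_pos (by linarith)
  have hg34 : (0:ℝ) < Real.Gamma (x + 3/4) := Real.Gamma_pos_of_pos (by linarith)
  have hg14 : (0:ℝ) < Real.Gamma (x + 1/4) := Real.Gamma_pos_of_pos (by linarith)
  have hx14 : (0:ℝ) < x + 1/4 := by linarith
  rw [hKn, hKn1, hpow, hG5, Wg, div_pow]
  field_simp

theorem stmt_3 (K : ℕ → ℝ)
    (hK : ∀ n : ℕ, K n = 2 ^ (4 * n) *
      Real.Gamma (((n : ℝ) + 1) / 2) ^ 2 *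
      Real.Gamma (((n : ℝ) + 3 / 2) / 2) *
      Real.Gamma (((n : ℝ) + 1 / 2) / 2))
    (A : ℕ → ℝ) (hA : ∀ n, A n = K n / K (n + 1)) :
    (fun n : ℕ => A n - ((1 / 4) * (n : ℝ) ^ (-2 : ℤ) - (1 / 4) * (n : ℝ) ^ (-3 : ℤ)))
      =O[Filter.atTop] fun n : ℕ => (n : ℝ) ^ (-4 : ℤ) := by
  rw [Asymptotics.isBigO_iff]
  refine ⟨2, ?_⟩
  filter_upwards [Filter.eventually_ge_atTop 1] with n hn
  set m : ℝ := (n:ℝ) with hmdef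
  have hm : (1:ℝ) ≤ m := Nat.one_le_cast.mpr hn
  have hm0 : (0:ℝ) < m := by linarith
  have hx : (0:ℝ) < m/2 := by linarith
  have hAn : A n = Wg (m/2) ^ 2 / (16 * (m/2 + 1/4)) := by
    rw [hA, A_formula K hK n]
  -- zpow rewrites
  have hz2 : m ^ (-2:ℤ) = 1/m^2 := by
    rw [zpow_neg, ← one_div]; norm_cast
  have hz3 : m ^ (-3:ℤ) = 1/m^3 := by
    rw [zpow_neg, ← one_div]; norm_cast
  have hz4 : m ^ (-4:ℤ) = 1/m^4 := by
    rw [zpow_neg, ← one_div]; norm_cast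
  have ht : (1/4) * m ^ (-2:ℤ) - (1/4) * m ^ (-3:ℤ) = (m-1)/(4*m^3) := by
    rw [hz2, hz3]; field_simp
  -- upper bound
  have hup : A n ≤ 1/(2*m+1)^2 := by
    rw [hAn, div_le_div_iff₀ (by positivity) (by positivity)]
    have h1 := Wg_sq_le_sharp hx
    nlinarith [sq_nonneg (Wg (m/2))]
  -- lower bound
  have hWlo : 1/(m/2 + 1/4 + 1/(32*(m/2))) ≤ Wg (m/2) ^ 2 := by
    have h2 := le_Wg_sq_sharp hx
    rw [div_le_iff₀ (by positivity)] at *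
    linarith
  have hlo : 1/(2*m+1)^2 - 1/m^4 ≤ A n := by
    have step : 1/(16 * (m/2 + 1/4) * (m/2 + 1/4 + 1/(32*(m/2)))) ≤ A n := by
      rw [hAn, div_le_div_iff₀ (by positivity) (by positivity)]
      have h2 := le_Wg_sq_sharp hx
      have hc : (0:ℝ) ≤ 16 * (m/2 + 1/4) := by positivity
      nlinarith [mul_le_mul_of_nonneg_right h2 hc]
    refine le_trans ?_ step
    rw [← sub_nonneg]
    have hid : 1/(16 * (m/2 + 1/4) * (m/2 + 1/4 + 1/(32*(m/2)))) - (1/(2*m+1)^2 - 1/m^4)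
        = ((2*m+1)^2*(8*m^2+4*m+1) - m^4)/(m^4*(2*m+1)^2*(8*m^2+4*m+1)) := by
      field_simp
      ring
    rw [hid]
    apply div_nonneg _ (by positivity)
    nlinarith
  -- compare 1/(2m+1)^2 with main term
  have e0 : 1/(2*m+1)^2 - (m-1)/(4*m^3) = (3*m+1)/(4*m^3*(2*m+1)^2) := by
    field_simp
    ring
  have e1 : 1/(2*m+1)^2 - (m-1)/(4*m^3) ≤ 1/m^4 := by
    rw [e0, div_le_div_iff₀ (by positivity) (by positivity)]
    nlinarith [pow_nonneg hm0.le 3, pow_nonneg hm0.le 4, pow_nonneg hm0.le 5]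
  have e2 : (m-1)/(4*m^3) ≤ 1/(2*m+1)^2 := by
    rw [← sub_nonneg, e0]
    positivity
  have hm4 : (0:ℝ) < 1/m^4 := by positivity
  have habs : |A n - ((1/4) * m ^ (-2:ℤ) - (1/4) * m ^ (-3:ℤ))| ≤ 2/m^4 := by
    rw [ht, abs_le]
    have h24 : 2/m^4 = 1/m^4 + 1/m^4 := by ring
    constructor
    · rw [h24]; linarith
    · rw [h24]; linarith
  calc ‖A n - ((1/4) * m ^ (-2:ℤ) - (1/4) * m ^ (-3:ℤ))‖
      = |A n - ((1/4) * m ^ (-2:ℤ) - (1/4) * m ^ (-3:ℤ))| := Real.norm_eq_abs _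
    _ ≤ 2/m^4 := habs
    _ = 2 * ‖m ^ (-4:ℤ)‖ := by
        rw [Real.norm_eq_abs, hz4, abs_of_pos (by positivity)]
        ring
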